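/- arXiv:math/0508233 — 2 statements merged into one kernel-verified Lean document; each statement's English description precedes it below -/
import Mathlib

section
/- For positive integers m and n with n > 1, the alternating sum ∑_{l=0}^{n-1} (-1)^l l^m equals (1/2)((-1)^{n+1} E_m(n) + E_m), where E_m(x) is the m-th Euler polynomial and E_m = E_m(0) is the m-th Euler number. -/
/-- The Euler polynomials, defined by the recurrence
`E_n(x) = x^n - (1/2) * ∑_{k<n} C(n,k) E_k(x)`,
equivalent to the generating function `2 e^{xt}/(e^t+1) = ∑ E_n(x) t^n/n!`. -/
noncomputable def eulerPoly : ℕ → Polynomial ℚ := fun n =>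
  n.strongRecOn fun n ih =>
    Polynomial.X ^ n - Polynomial.C (1/2 : ℚ) *
      ∑ k : Fin n, Polynomial.C ((n.choose k : ℚ)) * ih k k.2

/-- The Euler numbers `E_n = E_n(0)`, i.e. with EGF `2/(e^t+1)`. -/
noncomputable def eulerNumber (n : ℕ) : ℚ := (eulerPoly n).eval 0

lemma eulerPoly_def (n : ℕ) : eulerPoly n =
    Polynomial.X ^ n - Polynomial.C (1/2 : ℚ) *
      ∑ k : Fin n, Polynomial.C ((n.choose k : ℚ)) * eulerPoly k := by
  rw [eulerPoly, Nat.strongRecOn, WellFounded.fix_eq]; rfl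

lemma eulerPoly_eval (n : ℕ) (x : ℚ) : (eulerPoly n).eval x =
    x ^ n - (1/2 : ℚ) * ∑ k ∈ Finset.range n, (n.choose k : ℚ) * (eulerPoly k).eval x := by
  rw [eulerPoly_def]
  simp [Finset.sum_range fun k => (n.choose k : ℚ) * (eulerPoly k).eval x,
    Polynomial.eval_finset_sum]

lemma binom_aux (n : ℕ) (x : ℚ) :
    ∑ k ∈ Finset.range n, (n.choose k : ℚ) * x ^ k = (x + 1) ^ n - x ^ n := by
  have h := add_pow x 1 n
  simp only [one_pow, mul_one] at h
  rw [h, Finset.sum_range_succ, Nat.choose_self, Nat.cast_one, mul_one, add_sub_cancel_right]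
  exact Finset.sum_congr rfl fun k _ => mul_comm _ _

lemma eulerPoly_key (n : ℕ) (x : ℚ) :
    (eulerPoly n).eval (x + 1) + (eulerPoly n).eval x = 2 * x ^ n := by
  induction n using Nat.strong_induction_on with
  | _ n ih =>
    rw [eulerPoly_eval, eulerPoly_eval]
    have : ∑ k ∈ Finset.range n, (n.choose k : ℚ) * (eulerPoly k).eval (x + 1)
        + ∑ k ∈ Finset.range n, (n.choose k : ℚ) * (eulerPoly k).eval x
        = ∑ k ∈ Finset.range n, (n.choose k : ℚ) * (2 * x ^ k) := by
      rw [← Finset.sum_add_distrib]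
      refine Finset.sum_congr rfl fun k hk => ?_
      rw [← mul_add, ih k (Finset.mem_range.mp hk)]
    have h2 : ∑ k ∈ Finset.range n, (n.choose k : ℚ) * (2 * x ^ k)
        = 2 * ((x + 1) ^ n - x ^ n) := by
      rw [← binom_aux n x, Finset.mul_sum]
      refine Finset.sum_congr rfl fun k _ => ?_
      ring
    have h3 := this.trans h2
    linarith [h3]

theorem stmt_0 (m n : ℕ) (hm : 0 < m) (hn : 1 < n) :
    (∑ l ∈ Finset.range n, (-1 : ℚ) ^ l * (l : ℚ) ^ m) =
      (1/2) * ((-1 : ℚ) ^ (n + 1) * (eulerPoly m).eval (n : ℚ) + eulerNumber m) := by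
  set f : ℕ → ℚ := fun l => -(1/2 : ℚ) * (-1 : ℚ) ^ l * (eulerPoly m).eval (l : ℚ) with hf
  have key : ∀ l : ℕ, (-1 : ℚ) ^ l * (l : ℚ) ^ m = f (l + 1) - f l := by
    intro l
    have h := eulerPoly_key m (l : ℚ)
    simp only [hf, pow_succ, Nat.cast_add, Nat.cast_one]
    linear_combination (-(-1 : ℚ) ^ l / 2) * h
  calc (∑ l ∈ Finset.range n, (-1 : ℚ) ^ l * (l : ℚ) ^ m)
      = ∑ l ∈ Finset.range n, (f (l + 1) - f l) :=
        Finset.sum_congr rfl fun l _ => key l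
    _ = f n - f 0 := Finset.sum_range_sub f n
    _ = (1/2) * ((-1 : ℚ) ^ (n + 1) * (eulerPoly m).eval (n : ℚ) + eulerNumber m) := by
        simp only [hf, pow_zero, Nat.cast_zero, pow_succ, eulerNumber]
        ring
end

section
/- For s ∈ ℂ with Re(s) > 0 and x ∈ ℝ with 0 < x < 1, (1/Γ(s)) ∫_0^∞ t^{s-1} · 2e^{-xt}/(1+e^{-t}) dt = 2 ∑_{n=0}^{∞} (-1)^n/(n+x)^s. -/
open MeasureTheory Set Filter

lemma aux_int {s : ℂ} (hs : 0 < s.re) {p : ℝ} (hp : 0 < p) :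
    IntegrableOn (fun t : ℝ => (t : ℂ) ^ (s - 1) * Real.exp (-(p * t))) (Ioi 0) := by
  have := Complex.GammaIntegral_convergent hs
  rw [← mul_zero p, ← integrableOn_Ioi_comp_mul_left_iff _ _ hp] at this
  refine (IntegrableOn.congr_fun (this.const_mul (1 / (p : ℂ) ^ (s - 1)))
    (fun t (ht : 0 < t) ↦ ?_) measurableSet_Ioi)
  simp only [Complex.ofReal_mul]
  rw [Complex.mul_cpow_ofReal_nonneg hp.le ht.le]
  have hne : (p : ℂ) ^ (s - 1) ≠ 0 := by
    rw [Ne, Complex.cpow_eq_zero_iff, not_and_or]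
    exact Or.inl (Complex.ofReal_ne_zero.mpr hp.ne')
  field_simp

lemma aux_term {s : ℂ} (hs : 0 < s.re) {p : ℝ} (hp : 0 < p) :
    ∫ t in Ioi (0:ℝ), (t : ℂ) ^ (s - 1) * (Real.exp (-(p * t)) : ℂ) =
      Complex.Gamma s / (p : ℂ) ^ s := by
  have := Complex.integral_cpow_mul_exp_neg_mul_Ioi hs hp
  simp_rw [← Complex.ofReal_mul, ← Complex.ofReal_neg, ← Complex.ofReal_exp] at this
  rw [this, one_div, Complex.inv_cpow _ _
    (Complex.arg_ofReal_of_nonneg hp.le ▸ Real.pi_pos.ne), ← div_eq_inv_mul]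

lemma aux_cont {s : ℂ} : ContinuousOn (fun t : ℝ => (t : ℂ) ^ (s - 1)) (Ioi 0) := by
  intro t ht
  exact ((continuousAt_cpow_const (Complex.ofReal_mem_slitPlane.2 ht)).comp
    Complex.continuous_ofReal.continuousAt).continuousWithinAt

lemma aux_rem_int {s : ℂ} (hs : 0 < s.re) {c : ℝ} (hc : 0 < c) :
    IntegrableOn (fun t : ℝ => (t : ℂ) ^ (s - 1) *
      ((2 * Real.exp (-(c * t)) / (1 + Real.exp (-t)) : ℝ) : ℂ)) (Ioi 0) := by
  refine Integrable.mono' (((aux_int hs hc).norm.const_mul 2)) ?_ ?_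
  · refine ContinuousOn.aestronglyMeasurable (aux_cont.mul ?_) measurableSet_Ioi
    refine Continuous.continuousOn ?_
    refine Complex.continuous_ofReal.comp ?_
    exact ((continuous_const.mul ((continuous_const.mul continuous_id).neg.rexp)).div
      (continuous_const.add continuous_neg.rexp) (fun t => by positivity))
  · filter_upwards with t
    rw [norm_mul, norm_mul, Complex.norm_real, Real.norm_eq_abs]
    have h1 : |2 * Real.exp (-(c * t)) / (1 + Real.exp (-t))| ≤ 2 * Real.exp (-(c * t)) := by
      rw [abs_of_nonneg (by positivity)]
      exact div_le_self (by positivity) (by nlinarith [Real.exp_pos (-t)])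
    calc ‖(t : ℂ) ^ (s - 1)‖ * |2 * Real.exp (-(c * t)) / (1 + Real.exp (-t))|
        ≤ ‖(t : ℂ) ^ (s - 1)‖ * (2 * Real.exp (-(c * t))) :=
          mul_le_mul_of_nonneg_left h1 (norm_nonneg _)
      _ ≤ 2 * (‖(t : ℂ) ^ (s - 1)‖ * ‖(Real.exp (-(c * t)) : ℂ)‖) := by
          rw [Complex.norm_real, Real.norm_eq_abs, Real.abs_exp]; ring_nf; exact le_refl _

lemma aux_norm {s : ℂ} {t : ℝ} (ht : 0 < t) : ‖(t : ℂ) ^ (s - 1)‖ = t ^ (s.re - 1) := by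
  rw [Complex.norm_cpow_eq_rpow_re_of_pos ht, Complex.sub_re, Complex.one_re]

lemma aux_bound {s : ℂ} (hs : 0 < s.re) {c : ℝ} (hc : 0 < c) :
    ‖∫ t in Ioi (0:ℝ), (t : ℂ) ^ (s - 1) *
        ((2 * Real.exp (-(c * t)) / (1 + Real.exp (-t)) : ℝ) : ℂ)‖
      ≤ 2 * ((1 / c) ^ s.re * Real.Gamma s.re) := by
  have hgint : IntegrableOn (fun t : ℝ => 2 * (t ^ (s.re - 1) * Real.exp (-(c * t)))) (Ioi 0) := by
    refine IntegrableOn.congr_fun (((aux_int hs hc).norm).const_mul 2)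
      (fun t ht => ?_) measurableSet_Ioi
    rw [norm_mul, aux_norm ht, Complex.norm_real, Real.norm_eq_abs, Real.abs_exp]
  calc ‖∫ t in Ioi (0:ℝ), (t : ℂ) ^ (s - 1) *
        ((2 * Real.exp (-(c * t)) / (1 + Real.exp (-t)) : ℝ) : ℂ)‖
      ≤ ∫ t in Ioi (0:ℝ), 2 * (t ^ (s.re - 1) * Real.exp (-(c * t))) := by
        refine norm_integral_le_of_norm_le hgint ?_
        refine (ae_restrict_iff' measurableSet_Ioi).mpr (Filter.Eventually.of_forall
          fun t ht => ?_)
        rw [norm_mul, aux_norm ht, Complex.norm_real, Real.norm_eq_abs,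
          abs_of_nonneg (by positivity)]
        have h1 : 2 * Real.exp (-(c * t)) / (1 + Real.exp (-t)) ≤ 2 * Real.exp (-(c * t)) :=
          div_le_self (by positivity) (by nlinarith [Real.exp_pos (-t)])
        nlinarith [Real.rpow_pos_of_pos ht (s.re - 1), h1,
          mul_le_mul_of_nonneg_left h1 (Real.rpow_pos_of_pos ht (s.re - 1)).le]
    _ = 2 * ((1 / c) ^ s.re * Real.Gamma s.re) := by
        rw [integral_const_mul, Real.integral_rpow_mul_exp_neg_mul_Ioi hs hc]

lemma aux_geom (x t : ℝ) (N : ℕ) :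
    2 * Real.exp (-x * t) / (1 + Real.exp (-t)) =
      (∑ n ∈ Finset.range N, 2 * (-1 : ℝ) ^ n * Real.exp (-((n + x) * t))) +
        (-1 : ℝ) ^ N * (2 * Real.exp (-((x + N) * t)) / (1 + Real.exp (-t))) := by
  have hE : (0 : ℝ) < Real.exp (-t) := Real.exp_pos _
  have hd : (1 : ℝ) + Real.exp (-t) ≠ 0 := by positivity
  have hd2 : -Real.exp (-t) - 1 ≠ 0 := by nlinarith
  have hterm : ∀ n : ℕ, Real.exp (-((n + x) * t)) = Real.exp (-x * t) * Real.exp (-t) ^ n := by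
    intro n
    rw [← Real.exp_nat_mul, ← Real.exp_add]
    ring_nf
  have hgeom : ∑ n ∈ Finset.range N, (-Real.exp (-t)) ^ n =
      ((-Real.exp (-t)) ^ N - 1) / (-Real.exp (-t) - 1) :=
    geom_sum_eq (by nlinarith) N
  have hsum : ∑ n ∈ Finset.range N, 2 * (-1 : ℝ) ^ n * Real.exp (-((n + x) * t)) =
      2 * Real.exp (-x * t) * (((-Real.exp (-t)) ^ N - 1) / (-Real.exp (-t) - 1)) := by
    rw [← hgeom, Finset.mul_sum]
    refine Finset.sum_congr rfl fun n _ => ?_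
    rw [hterm n, neg_pow]
    ring
  have hN : Real.exp (-((x + N) * t)) = Real.exp (-x * t) * Real.exp (-t) ^ N := by
    rw [← Real.exp_nat_mul, ← Real.exp_add]; ring_nf
  rw [hsum, hN, neg_pow]
  field_simp
  ring

theorem stmt_7 (s : ℂ) (hs : 0 < s.re) (x : ℝ) (hx0 : 0 < x) (hx1 : x < 1) :
    Filter.Tendsto
      (fun N => 2 * ∑ n ∈ Finset.range N, (-1 : ℂ) ^ n / ((n : ℂ) + (x : ℂ)) ^ s)
      Filter.atTop
      (nhds ((1 / Complex.Gamma s) *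
        ∫ t in Set.Ioi (0 : ℝ),
          (t : ℂ) ^ (s - 1) * (2 * Real.exp (-x * t) / (1 + Real.exp (-t)) : ℝ))) := by
  have hΓ : Complex.Gamma s ≠ 0 := Complex.Gamma_ne_zero_of_re_pos hs
  set C : ℂ := ∫ t in Ioi (0:ℝ),
      (t : ℂ) ^ (s - 1) * ((2 * Real.exp (-x * t) / (1 + Real.exp (-t)) : ℝ) : ℂ) with hC
  set J : ℕ → ℂ := fun N => ∫ t in Ioi (0:ℝ),
      (t : ℂ) ^ (s - 1) * ((2 * Real.exp (-((x + N) * t)) / (1 + Real.exp (-t)) : ℝ) : ℂ) with hJ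
  have hdecomp : ∀ N : ℕ,
      C = (∑ n ∈ Finset.range N, (2 * (-1 : ℂ) ^ n) *
            (Complex.Gamma s / ((n : ℂ) + (x : ℂ)) ^ s)) + (-1 : ℂ) ^ N * J N := by
    intro N
    have hpt : ∀ t ∈ Ioi (0:ℝ),
        (t : ℂ) ^ (s - 1) * ((2 * Real.exp (-x * t) / (1 + Real.exp (-t)) : ℝ) : ℂ) =
        (∑ n ∈ Finset.range N, (2 * (-1 : ℂ) ^ n) *
            ((t : ℂ) ^ (s - 1) * (Real.exp (-(((n : ℝ) + x) * t)) : ℂ))) +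
          (-1 : ℂ) ^ N * ((t : ℂ) ^ (s - 1) *
            ((2 * Real.exp (-((x + (N : ℝ)) * t)) / (1 + Real.exp (-t)) : ℝ) : ℂ)) := by
      intro t _
      rw [show ((2 * Real.exp (-x * t) / (1 + Real.exp (-t)) : ℝ) : ℂ)
          = (((∑ n ∈ Finset.range N, 2 * (-1 : ℝ) ^ n * Real.exp (-(((n : ℝ) + x) * t))) +
              (-1 : ℝ) ^ N * (2 * Real.exp (-((x + (N : ℝ)) * t)) / (1 + Real.exp (-t))) : ℝ) : ℂ)
        from by rw [← aux_geom x t N]]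
      push_cast
      rw [mul_add, Finset.mul_sum]
      congr 1
      · exact Finset.sum_congr rfl fun n _ => by ring
      · ring
    have hterms : ∀ n ∈ Finset.range N, IntegrableOn
        (fun t : ℝ => (2 * (-1 : ℂ) ^ n) *
          ((t : ℂ) ^ (s - 1) * (Real.exp (-(((n : ℝ) + x) * t)) : ℂ))) (Ioi 0) :=
      fun n _ => (aux_int hs (by positivity : (0:ℝ) < (n : ℝ) + x)).const_mul _
    rw [hC, setIntegral_congr_fun measurableSet_Ioi hpt, integral_add
        (integrable_finset_sum _ hterms)
        ((aux_rem_int hs (by positivity : (0:ℝ) < x + (N : ℝ))).const_mul _),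
      integral_finset_sum _ hterms]
    congr 1
    · refine Finset.sum_congr rfl fun n _ => ?_
      rw [integral_const_mul, aux_term hs (by positivity : (0:ℝ) < (n : ℝ) + x)]
      norm_cast
    · rw [integral_const_mul]
  have hkey : ∀ N : ℕ,
      2 * ∑ n ∈ Finset.range N, (-1 : ℂ) ^ n / ((n : ℂ) + (x : ℂ)) ^ s
        = (1 / Complex.Gamma s) * C - (1 / Complex.Gamma s) * ((-1 : ℂ) ^ N * J N) := by
    intro N
    rw [hdecomp N, mul_add, add_sub_cancel_right, Finset.mul_sum, Finset.mul_sum]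
    refine Finset.sum_congr rfl fun n _ => ?_
    field_simp
  have h1 : Tendsto (fun N : ℕ => x + (N : ℝ)) atTop atTop :=
    tendsto_atTop_add_const_left _ x tendsto_natCast_atTop_atTop
  have h2 : Tendsto (fun N : ℕ => 1 / (x + (N : ℝ))) atTop (nhds 0) := by
    simpa [one_div, Pi.inv_def] using h1.inv_tendsto_atTop
  have h3 : Tendsto (fun N : ℕ => (1 / (x + (N : ℝ))) ^ s.re) atTop (nhds 0) := by
    have hc := (Real.continuousAt_rpow_const 0 s.re (Or.inr hs.le)).tendsto
    have := hc.comp h2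
    simpa [Function.comp_def, Real.zero_rpow hs.ne'] using this
  have h4 : Tendsto (fun N : ℕ => 2 * ((1 / (x + (N : ℝ))) ^ s.re * Real.Gamma s.re))
      atTop (nhds 0) := by
    simpa using ((h3.mul_const (Real.Gamma s.re)).const_mul 2)
  have h5 : Tendsto (fun N : ℕ => (-1 : ℂ) ^ N * J N) atTop (nhds 0) := by
    rw [tendsto_zero_iff_norm_tendsto_zero]
    refine squeeze_zero (fun N => norm_nonneg _) (fun N => ?_) h4
    rw [norm_mul, norm_pow, norm_neg, norm_one, one_pow, one_mul]
    exact aux_bound hs (show (0:ℝ) < x + (N : ℝ) by positivity)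
  have h6 : Tendsto (fun N : ℕ => (1 / Complex.Gamma s) * C -
      (1 / Complex.Gamma s) * ((-1 : ℂ) ^ N * J N)) atTop
      (nhds ((1 / Complex.Gamma s) * C)) := by
    simpa using tendsto_const_nhds.sub ((h5.const_mul (1 / Complex.Gamma s)))
  exact h6.congr (fun N => (hkey N).symm)
end
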